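/- Consider the voting game with 2N+1 voters (N ≥ 1 an integer). For a type-symmetric strategy pair σ = (σ^A, σ^B) ∈ [0,1]², define the pivotal probabilities φ_A(σ) = C(2N,N)·[q_A σ^A + (1−q_A)(1−σ^B)]^N·[q_A(1−σ^A) + (1−q_A)σ^B]^N and φ_B(σ) = C(2N,N)·[q_B σ^B + (1−q_B)(1−σ^A)]^N·[q_B(1−σ^B) + (1−q_B)σ^A]^N, and the thresholds t_low = (1−w)(1−q_B)/(q_A + w(1−q_B)) and t_high = (q_B + w(1−q_A))/((1−w)(1−q_A)). Call σ an equilibrium if φ_A(σ) + φ_B(σ) > 0 and the following best-response conditions hold: σ^A = 1 implies φ_A ≥ t_low·φ_B, σ^A = 0 implies φ_A ≤ t_low·φ_B, σ^A ∈ (0,1) implies φ_A = t_low·φ_B; and σ^B = 1 implies φ_A ≤ t_high·φ_B, σ^B = 0 implies φ_A ≥ t_high·φ_B, σ^B ∈ (0,1) implies φ_A = t_high·φ_B. Then: (i) if q_A = q_B, for every N the unique equilibrium is (σ^A, σ^B) = (1,1); (ii) if q_A > q_B, the unique equilibrium is (1,1) when N < N*(w), and (σ*_N(w), 1) when N ≥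 N*(w). -/

import Mathlib

/-- Pivotal probability conditional on state `A`, given `2N+1` voters and
type-symmetric strategy `σ = (σ^A, σ^B)`. -/
noncomputable def phiA (N : ℕ) (qA : ℝ) (σ : ℝ × ℝ) : ℝ :=
  (Nat.choose (2 * N) N : ℝ) * (qA * σ.1 + (1 - qA) * (1 - σ.2)) ^ N *
    (qA * (1 - σ.1) + (1 - qA) * σ.2) ^ N

/-- Pivotal probability conditional on state `B`. -/
noncomputable def phiB (N : ℕ) (qB : ℝ) (σ : ℝ × ℝ) : ℝ :=
  (Nat.choose (2 * N) N : ℝ) * (qB * σ.2 + (1 - qB) * (1 - σ.1)) ^ N *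
    (qB * (1 - σ.2) + (1 - qB) * σ.1) ^ N

/-- Lower likelihood-ratio threshold `t_low = ψ(w)`. -/
noncomputable def tLow (qA qB w : ℝ) : ℝ := (1 - w) * (1 - qB) / (qA + w * (1 - qB))

/-- Upper likelihood-ratio threshold `t_high`. -/
noncomputable def tHigh (qA qB w : ℝ) : ℝ := (qB + w * (1 - qA)) / ((1 - w) * (1 - qA))

/-- Type-symmetric responsive equilibrium of the voting game with motivated voters. -/
def IsEquilibrium (N : ℕ) (qA qB w : ℝ) (σ : ℝ × ℝ) : Prop :=
  σ.1 ∈ Set.Icc (0 : ℝ) 1 ∧ σ.2 ∈ Set.Icc (0 : ℝ) 1 ∧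
  0 < phiA N qA σ + phiB N qB σ ∧
  (σ.1 = 1 → tLow qA qB w * phiB N qB σ ≤ phiA N qA σ) ∧
  (σ.1 = 0 → phiA N qA σ ≤ tLow qA qB w * phiB N qB σ) ∧
  (0 < σ.1 → σ.1 < 1 → phiA N qA σ = tLow qA qB w * phiB N qB σ) ∧
  (σ.2 = 1 → phiA N qA σ ≤ tHigh qA qB w * phiB N qB σ) ∧
  (σ.2 = 0 → tHigh qA qB w * phiB N qB σ ≤ phiA N qA σ) ∧
  (0 < σ.2 → σ.2 < 1 → phiA N qA σ = tHigh qA qB w * phiB N qB σ)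

/-- `ψ(w) = (1−w)(1−q_B)/(q_A + w(1−q_B))`. -/
noncomputable def psi (qA qB w : ℝ) : ℝ := (1 - w) * (1 - qB) / (qA + w * (1 - qB))

/-- `N*(w) = ⌈ log ψ(w) / log (q_A(1−q_A)/(q_B(1−q_B))) ⌉`. -/
noncomputable def Nstar (qA qB w : ℝ) : ℤ :=
  ⌈Real.log (psi qA qB w) / Real.log (qA * (1 - qA) / (qB * (1 - qB)))⌉

/-- Equilibrium mixing probability
`σ*_N(w) = (q_A − ψ(w)^{1/N}(1−q_B)) / (q_A² − ψ(w)^{1/N}(1−q_B)²)`. -/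
noncomputable def sigmaStar (N : ℕ) (qA qB w : ℝ) : ℝ :=
  (qA - psi qA qB w ^ ((1 : ℝ) / N) * (1 - qB)) /
    (qA ^ 2 - psi qA qB w ^ ((1 : ℝ) / N) * (1 - qB) ^ 2)

set_option maxHeartbeats 1000000

private lemma pow_eq_pow_iff_real {a b : ℝ} (ha : 0 ≤ a) (hb : 0 ≤ b) {n : ℕ} (hn : n ≠ 0) :
    a ^ n = b ^ n ↔ a = b := by
  constructor
  · intro h
    exact le_antisymm ((pow_le_pow_iff_left₀ ha hb hn).1 h.le)
      ((pow_le_pow_iff_left₀ hb ha hn).1 h.ge)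
  · rintro rfl; rfl

private lemma prod_pow_eq (C p q r : ℝ) (h : p * q = r) (N : ℕ) :
    C * p ^ N * q ^ N = C * r ^ N := by
  rw [← h, mul_pow, mul_assoc]

private lemma pow_shuffle (x C p q r : ℝ) (h : x * p * q = r) (N : ℕ) :
    x ^ N * (C * p ^ N * q ^ N) = C * r ^ N := by
  rw [← h, mul_pow, mul_pow]; ring

private lemma char_lemma (N : ℕ) (hN : 1 ≤ N) (qA qB w : ℝ)
    (hqB : 1 / 2 < qB) (hqBA : qB ≤ qA) (hqA : qA < 1)
    (hw0 : 0 ≤ w) (hw1 : w < 1) (σ : ℝ × ℝ) :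
    IsEquilibrium N qA qB w σ ↔
      (σ.2 = 1 ∧ 0 < σ.1 ∧ σ.1 ≤ 1 ∧
        psi qA qB w ^ ((1 : ℝ) / N) * (1 - qB) * (1 - (1 - qB) * σ.1) ≤ qA * (1 - qA * σ.1) ∧
        (σ.1 < 1 →
          qA * (1 - qA * σ.1) =
            psi qA qB w ^ ((1 : ℝ) / N) * (1 - qB) * (1 - (1 - qB) * σ.1))) := by
  obtain ⟨a, b⟩ := σ
  have hN0 : N ≠ 0 := Nat.one_le_iff_ne_zero.mp hN
  set C : ℝ := (Nat.choose (2 * N) N : ℝ) with hCdef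
  have hC : (0 : ℝ) < C :=
    Nat.cast_pos.mpr (Nat.choose_pos (by omega : N ≤ 2 * N))
  have hqB1 : qB < 1 := lt_of_le_of_lt hqBA hqA
  have hqB0 : (0 : ℝ) < qB := by linarith
  have hqA0 : (0 : ℝ) < qA := by linarith
  have h1qB : (0 : ℝ) < 1 - qB := by linarith
  have h1qA : (0 : ℝ) < 1 - qA := by linarith
  have hden : (0 : ℝ) < qA + w * (1 - qB) := by nlinarith
  have hψ0 : 0 < psi qA qB w := by
    rw [psi]; exact div_pos (by nlinarith) hden
  have hψ1 : psi qA qB w < 1 := by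
    rw [psi, div_lt_one hden]; nlinarith
  set x : ℝ := psi qA qB w ^ ((1 : ℝ) / N) with hxdef
  have hx0 : 0 < x := Real.rpow_pos_of_pos hψ0 _
  have hx1 : x < 1 := Real.rpow_lt_one hψ0.le hψ1 (by positivity)
  have hxN : x ^ N = psi qA qB w := by
    rw [hxdef, ← Real.rpow_natCast (psi qA qB w ^ ((1 : ℝ) / N)) N,
      ← Real.rpow_mul hψ0.le, one_div_mul_cancel (Nat.cast_ne_zero.mpr hN0), Real.rpow_one]
  have hT : tLow qA qB w = x ^ N := by rw [hxN]; rfl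
  have htHden : (0 : ℝ) < (1 - w) * (1 - qA) := mul_pos (by linarith) h1qA
  have htH1 : 1 < tHigh qA qB w := by
    rw [tHigh, lt_div_iff₀ htHden]; nlinarith
  have htLH : tLow qA qB w < tHigh qA qB w := by
    rw [hT, hxN]; exact lt_trans hψ1 htH1
  have htL0 : 0 < tLow qA qB w := by rw [hT]; positivity
  constructor
  · rintro ⟨⟨ha0, ha1⟩, ⟨hb0, hb1⟩, hpos, hA1, hA0, hAint, hB1, hB0, hBint⟩
    dsimp only at *
    -- step 1 : b = 1
    have hb : b = 1 := by
      by_contra hbne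
      have hblt : b < 1 := lt_of_le_of_ne hb1 hbne
      rcases eq_or_lt_of_le ha1 with ha_eq | ha_lt
      · -- a = 1
        subst ha_eq
        rcases eq_or_lt_of_le hb0 with hb_eq | hb_pos
        · -- b = 0
          have e1 : phiA N qA (1, b) = 0 := by
            rw [phiA, ← hb_eq]; dsimp only
            rw [show qA * (1 - 1) + (1 - qA) * (0 : ℝ) = 0 by ring, zero_pow hN0, mul_zero]
          have e2 : phiB N qB (1, b) = 0 := by
            rw [phiB, ← hb_eq]; dsimp only
            rw [show qB * 0 + (1 - qB) * (1 - (1 : ℝ)) = 0 by ring, zero_pow hN0, mul_zero,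
              zero_mul]
          rw [e1, e2] at hpos; linarith
        · -- 0 < b < 1
          have heq := hBint hb_pos hblt
          have h2 : phiA N qA (1, b) = C * (((1 - qA) * b) * (1 - (1 - qA) * b)) ^ N := by
            rw [phiA]; dsimp only
            rw [show qA * 1 + (1 - qA) * (1 - b) = 1 - (1 - qA) * b by ring,
              show qA * (1 - 1) + (1 - qA) * b = (1 - qA) * b by ring]
            exact prod_pow_eq C _ _ _ (by ring) N
          have h3 : phiB N qB (1, b) = C * ((qB * b) * (1 - qB * b)) ^ N := by
            rw [phiB]; dsimp only
            rw [show qB * b + (1 - qB) * (1 - 1) = qB * b by ring,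
              show qB * (1 - b) + (1 - qB) * 1 = 1 - qB * b by ring]
            exact prod_pow_eq C _ _ _ (by ring) N
          have hub : (1 - qA) * b < qB * b := by nlinarith
          have hlt : ((1 - qA) * b) * (1 - (1 - qA) * b) < (qB * b) * (1 - qB * b) := by
            nlinarith [mul_pos (sub_pos.mpr hub)
              (by nlinarith : (0 : ℝ) < 1 - ((1 - qA) * b + qB * b))]
          have hbig : phiA N qA (1, b) < tHigh qA qB w * phiB N qB (1, b) := by
            rw [h2, h3]
            have p1 : C * (((1 - qA) * b) * (1 - (1 - qA) * b)) ^ N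
                < C * ((qB * b) * (1 - qB * b)) ^ N :=
              mul_lt_mul_of_pos_left (pow_lt_pow_left₀ hlt
                (mul_nonneg (mul_nonneg h1qA.le hb0) (by nlinarith)) hN0) hC
            have p2 : C * ((qB * b) * (1 - qB * b)) ^ N
                ≤ tHigh qA qB w * (C * ((qB * b) * (1 - qB * b)) ^ N) := by
              have hnn : (0 : ℝ) ≤ (qB * b) * (1 - qB * b) := by nlinarith
              exact le_mul_of_one_le_left
                (mul_nonneg hC.le (pow_nonneg hnn N)) htH1.le
            linarith
          exact absurd heq (ne_of_lt hbig)
      · -- a < 1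
        have hdn : phiA N qA (a, b) ≤ tLow qA qB w * phiB N qB (a, b) := by
          rcases eq_or_lt_of_le ha0 with ha_eq | ha_pos
          · exact hA0 ha_eq.symm
          · exact (hAint ha_pos ha_lt).le
        have hup : tHigh qA qB w * phiB N qB (a, b) ≤ phiA N qA (a, b) := by
          rcases eq_or_lt_of_le hb0 with hb_eq | hb_pos
          · exact hB0 hb_eq.symm
          · exact (hBint hb_pos hblt).ge
        have hφB0 : 0 ≤ phiB N qB (a, b) := by
          rw [phiB]; dsimp only
          exact mul_nonneg (mul_nonneg hC.le (pow_nonneg (by nlinarith) N))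
            (pow_nonneg (by nlinarith) N)
        have hφBle : phiB N qB (a, b) ≤ 0 := by nlinarith
        have hφB : phiB N qB (a, b) = 0 := le_antisymm hφBle hφB0
        rw [hφB, mul_zero] at hdn hup
        linarith
    subst hb
    -- step 2 : 0 < a
    have ha_pos : 0 < a := by
      rcases eq_or_lt_of_le ha0 with ha_eq | ha_pos
      · exfalso
        have e1 : phiA N qA (a, 1) = 0 := by
          rw [phiA, ← ha_eq]; dsimp only
          rw [show qA * 0 + (1 - qA) * (1 - (1 : ℝ)) = 0 by ring, zero_pow hN0, mul_zero,
            zero_mul]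
        have e2 : phiB N qB (a, 1) = 0 := by
          rw [phiB, ← ha_eq]; dsimp only
          rw [show qB * (1 - 1) + (1 - qB) * (0 : ℝ) = 0 by ring, zero_pow hN0, mul_zero]
        rw [e1, e2] at hpos; linarith
      · exact ha_pos
    have h1 : tLow qA qB w * phiB N qB (a, 1)
        = C * (a * (x * (1 - qB) * (1 - (1 - qB) * a))) ^ N := by
      rw [hT, phiB]; dsimp only
      rw [show qB * 1 + (1 - qB) * (1 - a) = 1 - (1 - qB) * a by ring,
        show qB * (1 - 1) + (1 - qB) * a = (1 - qB) * a by ring]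
      exact pow_shuffle x C _ _ _ (by ring) N
    have h2 : phiA N qA (a, 1) = C * (a * (qA * (1 - qA * a))) ^ N := by
      rw [phiA]; dsimp only
      rw [show qA * a + (1 - qA) * (1 - 1) = qA * a by ring,
        show qA * (1 - a) + (1 - qA) * 1 = 1 - qA * a by ring]
      exact prod_pow_eq C _ _ _ (by ring) N
    have hv' : 0 < 1 - (1 - qB) * a := by nlinarith
    have hu' : 0 < 1 - qA * a := by nlinarith
    have hP1 : 0 < a * (x * (1 - qB) * (1 - (1 - qB) * a)) :=
      mul_pos ha_pos (mul_pos (mul_pos hx0 h1qB) hv')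
    have hP2 : 0 < a * (qA * (1 - qA * a)) := mul_pos ha_pos (mul_pos hqA0 hu')
    refine ⟨rfl, ha_pos, ha1, ?_, ?_⟩
    · -- the inequality
      rcases eq_or_lt_of_le ha1 with ha_eq | ha_lt
      · subst ha_eq
        have hle := hA1 rfl
        rw [h1, h2] at hle
        have := (pow_le_pow_iff_left₀ hP1.le hP2.le hN0).1
          ((mul_le_mul_iff_right₀ hC).1 hle)
        nlinarith
      · have heq := hAint ha_pos ha_lt
        rw [h1, h2] at heq
        have hee := (pow_eq_pow_iff_real hP1.le hP2.le hN0).1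
          ((mul_right_inj' hC.ne').1 heq.symm)
        have := (mul_right_inj' ha_pos.ne').1 hee
        linarith [this.ge]
    · -- the conditional equality
      intro ha_lt
      have heq := hAint ha_pos ha_lt
      rw [h1, h2] at heq
      have hee := (pow_eq_pow_iff_real hP2.le hP1.le hN0).1
        ((mul_right_inj' hC.ne').1 heq)
      exact (mul_right_inj' ha_pos.ne').1 hee
  · rintro ⟨hb, ha_pos, ha1, hineq, heqc⟩
    dsimp only at hb hineq heqc ha_pos ha1
    subst hb
    have h1 : tLow qA qB w * phiB N qB (a, 1)
        = C * (a * (x * (1 - qB) * (1 - (1 - qB) * a))) ^ N := by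
      rw [hT, phiB]; dsimp only
      rw [show qB * 1 + (1 - qB) * (1 - a) = 1 - (1 - qB) * a by ring,
        show qB * (1 - 1) + (1 - qB) * a = (1 - qB) * a by ring]
      exact pow_shuffle x C _ _ _ (by ring) N
    have h2 : phiA N qA (a, 1) = C * (a * (qA * (1 - qA * a))) ^ N := by
      rw [phiA]; dsimp only
      rw [show qA * a + (1 - qA) * (1 - 1) = qA * a by ring,
        show qA * (1 - a) + (1 - qA) * 1 = 1 - qA * a by ring]
      exact prod_pow_eq C _ _ _ (by ring) N
    have h3 : phiB N qB (a, 1) = C * (a * ((1 - qB) * (1 - (1 - qB) * a))) ^ N := by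
      rw [phiB]; dsimp only
      rw [show qB * 1 + (1 - qB) * (1 - a) = 1 - (1 - qB) * a by ring,
        show qB * (1 - 1) + (1 - qB) * a = (1 - qB) * a by ring]
      exact prod_pow_eq C _ _ _ (by ring) N
    have hv' : 0 < 1 - (1 - qB) * a := by nlinarith
    have hu' : 0 < 1 - qA * a := by nlinarith
    have hP1 : 0 < a * (x * (1 - qB) * (1 - (1 - qB) * a)) :=
      mul_pos ha_pos (mul_pos (mul_pos hx0 h1qB) hv')
    have hP2 : 0 < a * (qA * (1 - qA * a)) := mul_pos ha_pos (mul_pos hqA0 hu')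
    have hP3 : 0 < a * ((1 - qB) * (1 - (1 - qB) * a)) :=
      mul_pos ha_pos (mul_pos h1qB hv')
    have hφBpos : 0 < phiB N qB (a, 1) := by
      rw [h3]; exact mul_pos hC (pow_pos hP3 N)
    have hφApos : 0 < phiA N qA (a, 1) := by
      rw [h2]; exact mul_pos hC (pow_pos hP2 N)
    refine ⟨⟨ha_pos.le, ha1⟩, ⟨zero_le_one, le_refl 1⟩, by linarith, ?_, ?_, ?_, ?_, ?_, ?_⟩
    · -- a = 1 → tLow φB ≤ φA
      intro ha_eq
      subst ha_eq
      rw [h1, h2]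
      apply mul_le_mul_of_nonneg_left _ hC.le
      apply pow_le_pow_left₀ hP1.le
      nlinarith
    · -- a = 0 → impossible
      intro ha_eq; exact absurd ha_eq ha_pos.ne'
    · -- interior
      intro _ hlt
      have heq := heqc hlt
      rw [h1, h2]
      congr 1
      rw [pow_eq_pow_iff_real hP2.le hP1.le hN0, mul_right_inj' ha_pos.ne']
      exact heq
    · -- b = 1 → φA ≤ tHigh φB
      intro _
      rcases eq_or_lt_of_le ha1 with ha_eq | ha_lt
      · subst ha_eq
        rw [h2, h3]
        calc C * (1 * (qA * (1 - qA * 1))) ^ N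
            ≤ C * (1 * ((1 - qB) * (1 - (1 - qB) * 1))) ^ N := by
              apply mul_le_mul_of_nonneg_left _ hC.le
              apply pow_le_pow_left₀ hP2.le
              nlinarith
          _ ≤ tHigh qA qB w * (C * (1 * ((1 - qB) * (1 - (1 - qB) * 1))) ^ N) :=
              le_mul_of_one_le_left (mul_nonneg hC.le (pow_nonneg hP3.le N)) htH1.le
      · have heq := heqc ha_lt
        have hAeq : phiA N qA (a, 1) = tLow qA qB w * phiB N qB (a, 1) := by
          rw [h1, h2]
          congr 1
          rw [pow_eq_pow_iff_real hP2.le hP1.le hN0, mul_right_inj' ha_pos.ne']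
          exact heq
        rw [hAeq]
        nlinarith
    · -- b = 0 impossible
      intro h; exact absurd h one_ne_zero
    · intro _ h; exact absurd h (lt_irrefl 1)

private lemma strict_case (N : ℕ) (hN : 1 ≤ N) (qA qB w : ℝ)
    (hqB : 1 / 2 < qB) (hqBA : qB ≤ qA) (hqA : qA < 1)
    (hw0 : 0 ≤ w) (hw1 : w < 1)
    (hstrict : psi qA qB w ^ ((1 : ℝ) / N) * (qB * (1 - qB)) < qA * (1 - qA)) :
    ∀ σ : ℝ × ℝ, IsEquilibrium N qA qB w σ ↔ σ = (1, 1) := by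
  intro σ
  rw [char_lemma N hN qA qB w hqB hqBA hqA hw0 hw1 σ]
  set x : ℝ := psi qA qB w ^ ((1 : ℝ) / N) with hxdef
  have hqB1 : qB < 1 := lt_of_le_of_lt hqBA hqA
  have hqB0 : (0 : ℝ) < qB := by linarith
  have hqA0 : (0 : ℝ) < qA := by linarith
  have h1qB : (0 : ℝ) < 1 - qB := by linarith
  have hden : (0 : ℝ) < qA + w * (1 - qB) := by nlinarith
  have hψ0 : 0 < psi qA qB w := by
    rw [psi]; exact div_pos (by nlinarith) hden
  have hψ1 : psi qA qB w < 1 := by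
    rw [psi, div_lt_one hden]; nlinarith
  have hx0 : 0 < x := Real.rpow_pos_of_pos hψ0 _
  have hx1 : x < 1 := Real.rpow_lt_one hψ0.le hψ1 (by positivity)
  have hg0 : 0 < qA - x * (1 - qB) := by nlinarith
  constructor
  · rintro ⟨hb, ha_pos, ha1, hineq, heqc⟩
    have ha : σ.1 = 1 := by
      by_contra hne
      have ha_lt : σ.1 < 1 := lt_of_le_of_ne ha1 hne
      have heq := heqc ha_lt
      nlinarith [mul_pos (sub_pos.mpr ha_lt) hg0, mul_pos ha_pos (sub_pos.mpr hstrict)]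
    exact Prod.ext ha hb
  · rintro rfl
    refine ⟨rfl, one_pos, le_refl 1, ?_, fun h => absurd h (lt_irrefl 1)⟩
    show x * (1 - qB) * (1 - (1 - qB) * 1) ≤ qA * (1 - qA * 1)
    nlinarith

private lemma weak_case (N : ℕ) (hN : 1 ≤ N) (qA qB w : ℝ)
    (hqB : 1 / 2 < qB) (hqBA : qB ≤ qA) (hqA : qA < 1)
    (hw0 : 0 ≤ w) (hw1 : w < 1)
    (hweak : qA * (1 - qA) ≤ psi qA qB w ^ ((1 : ℝ) / N) * (qB * (1 - qB))) :
    ∀ σ : ℝ × ℝ, IsEquilibrium N qA qB w σ ↔ σ = (sigmaStar N qA qB w, 1) := by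
  intro σ
  rw [char_lemma N hN qA qB w hqB hqBA hqA hw0 hw1 σ]
  set x : ℝ := psi qA qB w ^ ((1 : ℝ) / N) with hxdef
  have hqB1 : qB < 1 := lt_of_le_of_lt hqBA hqA
  have hqB0 : (0 : ℝ) < qB := by linarith
  have hqA0 : (0 : ℝ) < qA := by linarith
  have h1qB : (0 : ℝ) < 1 - qB := by linarith
  have hden : (0 : ℝ) < qA + w * (1 - qB) := by nlinarith
  have hψ0 : 0 < psi qA qB w := by
    rw [psi]; exact div_pos (by nlinarith) hden
  have hψ1 : psi qA qB w < 1 := by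
    rw [psi, div_lt_one hden]; nlinarith
  have hx0 : 0 < x := Real.rpow_pos_of_pos hψ0 _
  have hx1 : x < 1 := Real.rpow_lt_one hψ0.le hψ1 (by positivity)
  have hn0 : 0 < qA - x * (1 - qB) := by nlinarith
  have hd0 : 0 < qA ^ 2 - x * (1 - qB) ^ 2 := by nlinarith
  have hs : sigmaStar N qA qB w = (qA - x * (1 - qB)) / (qA ^ 2 - x * (1 - qB) ^ 2) := rfl
  have hs0 : 0 < sigmaStar N qA qB w := by rw [hs]; exact div_pos hn0 hd0
  have hs1 : sigmaStar N qA qB w ≤ 1 := by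
    rw [hs, div_le_one hd0]; nlinarith
  have hsd : sigmaStar N qA qB w * (qA ^ 2 - x * (1 - qB) ^ 2) = qA - x * (1 - qB) := by
    rw [hs]; field_simp
  have hkey : qA * (1 - qA * sigmaStar N qA qB w)
      = x * (1 - qB) * (1 - (1 - qB) * sigmaStar N qA qB w) := by
    nlinarith [hsd]
  constructor
  · rintro ⟨hb, ha_pos, ha1, hineq, heqc⟩
    have ha : σ.1 = sigmaStar N qA qB w := by
      rcases eq_or_lt_of_le ha1 with ha_eq | ha_lt
      · -- σ.1 = 1 : then boundary inequality forces equality, so sigmaStar = 1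
        rw [ha_eq] at hineq
        have heq2 : x * (qB * (1 - qB)) = qA * (1 - qA) := by nlinarith
        have : sigmaStar N qA qB w = 1 := by
          rw [hs, div_eq_one_iff_eq hd0.ne']; nlinarith
        rw [ha_eq, this]
      · have heq := heqc ha_lt
        have : σ.1 * (qA ^ 2 - x * (1 - qB) ^ 2) = qA - x * (1 - qB) := by nlinarith
        have := this.trans hsd.symm
        exact mul_right_cancel₀ hd0.ne' this
    exact Prod.ext ha hb
  · rintro rfl
    exact ⟨rfl, hs0, hs1, le_of_eq hkey.symm, fun _ => hkey⟩

/-- **Proposition 1** (equilibrium characterization): if `q_A = q_B` the unique equilibrium is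
sincere voting `(1,1)`; if `q_A > q_B` the unique equilibrium is `(1,1)` for `N < N*(w)` and
`(σ*_N(w), 1)` for `N ≥ N*(w)`. -/
theorem condorcet_equilibrium (N : ℕ) (hN : 1 ≤ N) (qA qB w : ℝ)
    (hqB : 1 / 2 < qB) (hqBA : qB ≤ qA) (hqA : qA < 1)
    (hw0 : 0 ≤ w) (hw1 : w < 1) :
    (qA = qB → ∀ σ : ℝ × ℝ, IsEquilibrium N qA qB w σ ↔ σ = (1, 1)) ∧
    (qB < qA →
      ((N : ℤ) < Nstar qA qB w →
        ∀ σ : ℝ × ℝ, IsEquilibrium N qA qB w σ ↔ σ = (1, 1)) ∧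
      (Nstar qA qB w ≤ (N : ℤ) →
        ∀ σ : ℝ × ℝ, IsEquilibrium N qA qB w σ ↔ σ = (sigmaStar N qA qB w, 1))) := by
  have hN0 : N ≠ 0 := Nat.one_le_iff_ne_zero.mp hN
  have hqB1 : qB < 1 := lt_of_le_of_lt hqBA hqA
  have hqB0 : (0 : ℝ) < qB := by linarith
  have hqA0 : (0 : ℝ) < qA := by linarith
  have h1qB : (0 : ℝ) < 1 - qB := by linarith
  have h1qA : (0 : ℝ) < 1 - qA := by linarith
  have hden : (0 : ℝ) < qA + w * (1 - qB) := by nlinarith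
  have hψ0 : 0 < psi qA qB w := by
    rw [psi]; exact div_pos (by nlinarith) hden
  have hψ1 : psi qA qB w < 1 := by
    rw [psi, div_lt_one hden]; nlinarith
  set x : ℝ := psi qA qB w ^ ((1 : ℝ) / N) with hxdef
  have hx0 : 0 < x := Real.rpow_pos_of_pos hψ0 _
  have hx1 : x < 1 := Real.rpow_lt_one hψ0.le hψ1 (by positivity)
  have hxN : x ^ N = psi qA qB w := by
    rw [hxdef, ← Real.rpow_natCast (psi qA qB w ^ ((1 : ℝ) / N)) N,
      ← Real.rpow_mul hψ0.le, one_div_mul_cancel (Nat.cast_ne_zero.mpr hN0), Real.rpow_one]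
  constructor
  · -- qA = qB
    intro hEq
    apply strict_case N hN qA qB w hqB hqBA hqA hw0 hw1
    have hpe : qA * (1 - qA) = qB * (1 - qB) := by rw [hEq]
    nlinarith [mul_pos hqB0 h1qB]
  · -- qB < qA
    intro hlt
    have hBprod : (0 : ℝ) < qB * (1 - qB) := mul_pos hqB0 h1qB
    have hAprod : (0 : ℝ) < qA * (1 - qA) := mul_pos hqA0 h1qA
    have hprod_lt : qA * (1 - qA) < qB * (1 - qB) := by nlinarith
    set r : ℝ := qA * (1 - qA) / (qB * (1 - qB)) with hrdef
    have hr0 : 0 < r := div_pos hAprod hBprod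
    have hr1 : r < 1 := (div_lt_one hBprod).mpr hprod_lt
    have hlogr : Real.log r < 0 := Real.log_neg hr0 hr1
    constructor
    · -- N < Nstar
      intro hNlt
      apply strict_case N hN qA qB w hqB hqBA hqA hw0 hw1
      have h1 : ((N : ℤ) : ℝ) < Real.log (psi qA qB w) / Real.log r := Int.lt_ceil.mp hNlt
      rw [lt_div_iff_of_neg hlogr] at h1
      have h2 : Real.log (psi qA qB w) < Real.log (r ^ N) := by
        rw [Real.log_pow]; push_cast at h1 ⊢; linarith
      have h3 : psi qA qB w < r ^ N :=
        (Real.log_lt_log_iff hψ0 (pow_pos hr0 N)).mp h2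
      rw [← hxN] at h3
      have h4 : x < r := (pow_lt_pow_iff_left₀ hx0.le hr0.le hN0).mp h3
      rw [hrdef] at h4
      have := (lt_div_iff₀ hBprod).mp h4
      linarith
    · -- Nstar ≤ N
      intro hNge
      apply weak_case N hN qA qB w hqB hqBA hqA hw0 hw1
      have h1 : Real.log (psi qA qB w) / Real.log r ≤ ((N : ℤ) : ℝ) := Int.ceil_le.mp hNge
      rw [div_le_iff_of_neg hlogr] at h1
      have h2 : Real.log (r ^ N) ≤ Real.log (psi qA qB w) := by
        rw [Real.log_pow]; push_cast at h1 ⊢; linarith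
      have h3 : r ^ N ≤ psi qA qB w :=
        (Real.log_le_log_iff (pow_pos hr0 N) hψ0).mp h2
      rw [← hxN] at h3
      have h4 : r ≤ x := (pow_le_pow_iff_left₀ hr0.le hx0.le hN0).mp h3
      rw [hrdef] at h4
      have := (div_le_iff₀ hBprod).mp h4
      linarith
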